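/- If the length of a shortest odd cycle (odd girth) of a graph G is l, then every odd cycle in the Cartesian product K₂ × G that contains a crossing edge (an edge joining the two copies of G) has length at least l + 2. -/

import Mathlib

open SimpleGraph

/-- The `n`-dimensional hypercube: vertices are binary strings of length `n`
(indexed so that bit `i+1` of the paper is index `i`), adjacent iff they
differ in exactly one bit. -/
def hypercube (n : ℕ) : SimpleGraph (Fin n → Bool) where
  Adj u v := ∃! i, u i ≠ v i
  symm := by
    constructor
    rintro u v ⟨i, hi, hu⟩
    exact ⟨i, hi.symm, fun j hj => hu j hj.symm⟩
  loopless := by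
    constructor
    rintro u ⟨i, hi, -⟩
    exact hi rfl

/-- Skip relation: `u` and `v` differ exactly in the last `k` bits
(indices `0, …, k-1`). -/
def skipRel (n k : ℕ) (u v : Fin n → Bool) : Prop :=
  u ≠ v ∧ ∀ i : Fin n, (i.val < k → u i ≠ v i) ∧ (k ≤ i.val → u i = v i)

/-- The enhanced hypercube `Q_{n,k}`: hypercube edges together with skip edges. -/
def enhanced (n k : ℕ) : SimpleGraph (Fin n → Bool) where
  Adj u v := (hypercube n).Adj u v ∨ skipRel n k u v
  symm := by
    constructor
    rintro u v (h | ⟨hne, h⟩)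
    · exact Or.inl ((hypercube n).adj_symm h)
    · exact Or.inr ⟨hne.symm, fun i =>
        ⟨fun hi => ((h i).1 hi).symm, fun hi => ((h i).2 hi).symm⟩⟩
  loopless := by
    constructor
    rintro u (h | ⟨hne, -⟩)
    · exact (hypercube n).irrefl h
    · exact hne rfl

/-- The folded hypercube `FQ_n`: hypercube edges together with complementary edges. -/
def folded (n : ℕ) : SimpleGraph (Fin n → Bool) where
  Adj u v := (hypercube n).Adj u v ∨ (u ≠ v ∧ ∀ i, u i ≠ v i)
  symm := by
    constructor
    rintro u v (h | ⟨hne, h⟩)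
    · exact Or.inl ((hypercube n).adj_symm h)
    · exact Or.inr ⟨hne.symm, fun i => (h i).symm⟩
  loopless := by
    constructor
    rintro u (h | ⟨hne, -⟩)
    · exact (hypercube n).irrefl h
    · exact hne rfl

/-- The Cartesian product `K₂ × G`: two copies of `G` joined by crossing edges. -/
def K2Prod {V : Type*} (G : SimpleGraph V) : SimpleGraph (Bool × V) :=
  (completeGraph Bool) □ G

/-- The edge `e` lies on a cycle of length `l` in `G`. -/
def EdgeOnCycle {V : Type*} (G : SimpleGraph V) (e : Sym2 V) (l : ℕ) : Prop :=
  ∃ (v : V) (c : G.Walk v v), c.IsCycle ∧ c.length = l ∧ e ∈ c.edges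


/-- Every closed walk of odd length contains an odd cycle of at most the same length. -/
lemma oddClosedWalk_exists_oddCycle {V : Type*} [DecidableEq V] (G : SimpleGraph V) :
    ∀ (n : ℕ) (v : V) (p : G.Walk v v), p.length ≤ n → Odd p.length →
      ∃ (w : V) (q : G.Walk w w), q.IsCycle ∧ Odd q.length ∧ q.length ≤ p.length := by
  intro n
  induction n with
  | zero =>
    intro v p hle hodd
    rw [Nat.odd_iff] at hodd
    omega
  | succ n ih =>
    intro v p hle hodd
    by_cases hcyc : p.IsCycle
    · exact ⟨v, p, hcyc, hodd, le_refl _⟩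
    cases p with
    | nil => simp [Nat.odd_iff] at hodd
    | cons h q =>
      rename_i u
      -- h : G.Adj v u, q : G.Walk u v
      rw [Walk.cons_isCycle_iff] at hcyc
      push_neg at hcyc
      by_cases hpath : q.IsPath
      · -- then s(v,u) ∈ q.edges; derive contradiction
        have he := hcyc hpath
        cases q with
        | nil => exact absurd h (G.loopless.irrefl v)
        | cons h' q' =>
          rename_i u'
          -- h' : G.Adj u u', q' : G.Walk u' v
          simp only [Walk.edges_cons, List.mem_cons] at he
          rcases he with he | he
          · rw [Sym2.eq_iff] at he
            rcases he with ⟨hvu, huu'⟩ | ⟨hvu', huu⟩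
            · exact absurd huu' h'.ne
            · subst hvu'
              have hq' : q'.IsPath := hpath.of_cons
              have hnil : (⟨q', hq'⟩ : G.Path v v) = Path.nil := Path.loop_eq _
              have hq'nil : q' = Walk.nil := congrArg Subtype.val hnil
              subst hq'nil
              simp [Nat.odd_iff] at hodd
          · have hu : u ∈ q'.support := Walk.snd_mem_support_of_mem_edges _ he
            have hnd := hpath.support_nodup
            simp only [Walk.support_cons, List.nodup_cons] at hnd
            exact absurd hu hnd.1
      · -- q has a repeated vertex
        rw [Walk.isPath_def, ← List.exists_duplicate_iff_not_nodup] at hpath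
        obtain ⟨w, hw⟩ := hpath
        have hwm : w ∈ q.support := hw.mem
        have hcount : 2 ≤ q.support.count w := List.duplicate_iff_two_le_count.mp hw
        have hspec : (q.takeUntil w hwm).append (q.dropUntil w hwm) = q := q.take_spec hwm
        have hsupp : q.support
            = (q.takeUntil w hwm).support ++ (q.dropUntil w hwm).support.tail := by
          conv_lhs => rw [← hspec]
          rw [Walk.support_append]
        have hone : (q.takeUntil w hwm).support.count w = 1 :=
          q.count_support_takeUntil_eq_one hwm
        have hwd : w ∈ (q.dropUntil w hwm).support.tail := by
          rw [hsupp, List.count_append, hone] at hcount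
          exact List.count_pos_iff.mp (by omega)
        have hlen1 : (q.takeUntil w hwm).length + (q.dropUntil w hwm).length = q.length := by
          conv_rhs => rw [← hspec]
          exact (Walk.length_append _ _).symm
        obtain ⟨u'', h'', d', hdd⟩ :
            ∃ (u'' : V) (h'' : G.Adj w u'') (d' : G.Walk u'' v),
              q.dropUntil w hwm = Walk.cons h'' d' := by
          cases hdeq : q.dropUntil w hwm with
          | nil => rw [hdeq] at hwd; simp at hwd
          | cons h'' d' => exact ⟨_, h'', d', rfl⟩
        rw [hdd] at hwd
        simp only [Walk.support_cons, List.tail_cons] at hwd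
        have hspec2 : (d'.takeUntil w hwd).append (d'.dropUntil w hwd) = d' :=
          d'.take_spec hwd
        have hlen2 : (d'.takeUntil w hwd).length + (d'.dropUntil w hwd).length = d'.length := by
          conv_rhs => rw [← hspec2]
          exact (Walk.length_append _ _).symm
        have hlend : (q.dropUntil w hwm).length = d'.length + 1 := by rw [hdd]; simp
        set B : G.Walk w w := Walk.cons h'' (d'.takeUntil w hwd) with hB
        set P : G.Walk v v := Walk.cons h ((q.takeUntil w hwm).append (d'.dropUntil w hwd))
          with hP
        have hBlen : B.length = (d'.takeUntil w hwd).length + 1 := by simp [hB]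
        have hPlen : P.length
            = (q.takeUntil w hwm).length + (d'.dropUntil w hwd).length + 1 := by
          simp [hP, Walk.length_append]
        have hsum : B.length + P.length = (Walk.cons h q).length := by
          simp only [Walk.length_cons]
          omega
        have htot := hle
        simp only [Walk.length_cons] at htot
        by_cases hBodd : Odd B.length
        · obtain ⟨w', q', hc', ho', hle'⟩ := ih w B (by omega) hBodd
          exact ⟨w', q', hc', ho', by omega⟩
        · have hPodd : Odd P.length := by
            rw [Nat.odd_iff] at hodd ⊢
            rw [Nat.odd_iff] at hBodd
            omega
          obtain ⟨w', q', hc', ho', hle'⟩ := ih v P (by omega) hPodd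
          exact ⟨w', q', hc', ho', by omega⟩

lemma K2Prod_proj {V : Type*} (G : SimpleGraph V) :
    ∀ {x y : Bool × V} (w : ((completeGraph Bool) □ G).Walk x y),
      ∃ (p : G.Walk x.2 y.2) (k : ℕ), w.length = p.length + k ∧ (Even k ↔ x.1 = y.1) ∧
        ((∃ a b : Bool × V, a.1 ≠ b.1 ∧ s(a, b) ∈ w.edges) → 1 ≤ k) := by
  intro x y w
  induction w with
  | nil => exact ⟨Walk.nil, 0, by simp, by simp, by simp⟩
  | cons h w ih =>
    rename_i x z y
    obtain ⟨p, k, hlen, hpar, hcr⟩ := ih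
    rcases boxProd_adj.mp h with ⟨hne, heq⟩ | ⟨hadj, heq⟩
    · -- crossing step: x.1 ≠ z.1, x.2 = z.2
      refine ⟨p.copy heq.symm rfl, k + 1, by simp [hlen]; omega, ?_, by omega⟩
      have hne' : x.1 ≠ z.1 := hne
      rw [Nat.even_add_one, hpar]
      revert hne'
      cases x.1 <;> cases z.1 <;> cases y.1 <;> simp
    · -- G-step: G.Adj x.2 z.2, x.1 = z.1
      refine ⟨Walk.cons hadj p, k, by simp [hlen]; omega, by rw [hpar, heq], ?_⟩
      rintro ⟨a, b, hab, he⟩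
      simp only [Walk.edges_cons, List.mem_cons] at he
      rcases he with he | he
      · exfalso
        rw [Sym2.eq_iff] at he
        rcases he with ⟨ha, hb⟩ | ⟨ha, hb⟩ <;>
          · apply hab; rw [ha, hb]; first | exact heq | exact heq.symm
      · exact hcr ⟨a, b, hab, he⟩

/-- If the odd girth of `G` is `l`, then every odd cycle in `K₂ × G` containing a
crossing edge has length at least `l + 2`. -/
theorem stmt0 {V : Type*} (G : SimpleGraph V) (l : ℕ) (hl : Odd l)
    (hex : ∃ (v : V) (c : G.Walk v v), c.IsCycle ∧ c.length = l)
    (hmin : ∀ (v : V) (c : G.Walk v v), c.IsCycle → Odd c.length → l ≤ c.length) :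
    ∀ (x : Bool × V) (c : (K2Prod G).Walk x x), c.IsCycle → Odd c.length →
      (∃ u : V, s(((true, u) : Bool × V), ((false, u) : Bool × V)) ∈ c.edges) →
      l + 2 ≤ c.length := by
  classical
  intro x c hc hodd hcross
  obtain ⟨p, k, hlen, hpar, hcr⟩ := K2Prod_proj G c
  have hlen : c.length = p.length + k := hlen
  have hkeven : Even k := hpar.mpr rfl
  have hk1 : 1 ≤ k := by
    obtain ⟨u, hu⟩ := hcross
    exact hcr ⟨(true, u), (false, u), by simp, hu⟩
  have hk2 : 2 ≤ k := by
    rcases hkeven with ⟨m, hm⟩; omega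
  have hpodd : Odd p.length := by
    rw [Nat.odd_iff] at hodd ⊢
    rcases hkeven with ⟨m, hm⟩
    omega
  obtain ⟨w, q, hqc, hqodd, hqle⟩ :=
    oddClosedWalk_exists_oddCycle G p.length x.2 p le_rfl hpodd
  have := hmin w q hqc hqodd
  omega
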